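/- Let C ⊆ F_2^n be a nonempty code with distance distribution (A_i). Let f(x) = Σ_{k=0}^n f_k·K_k(x) be a polynomial with nonnegative Krawtchouk coefficients f_k ≥ 0 for 1 ≤ k ≤ n, and let g: {0,…,n} → ℝ satisfy f(i) ≤ g(i) for all 0 ≤ i ≤ n. Then Σ_{i=1}^n g(i)·A_i ≥ |C|·f_0 − f(0). -/

import Mathlib

open Finset

noncomputable def distDistr (n : ℕ) (C : Finset (Fin n → ZMod 2)) (i : ℕ) : ℝ :=
  (((C ×ˢ C).filter (fun p => hammingDist p.1 p.2 = i)).card : ℝ) / (C.card : ℝ)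

noncomputable def kraw (n k i : ℕ) : ℝ :=
  ∑ j ∈ Finset.range (k + 1), (-1 : ℝ) ^ j * (i.choose j : ℝ) * ((n - i).choose (k - j) : ℝ)

namespace Stmt3Aux

variable {n : ℕ}

lemma two_cases (a : ZMod 2) : a = 0 ∨ a = 1 := by fin_cases a <;> [exact Or.inl rfl; exact Or.inr rfl]

noncomputable def chi (v u : Fin n → ZMod 2) : ℝ := ∏ j, (-1 : ℝ) ^ (v j * u j).val

lemma zmod_aux (a b c : ZMod 2) :
    (-1 : ℝ) ^ (a * b).val * (-1) ^ (a * c).val = (-1) ^ (a * (b + c)).val := by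
  rcases two_cases a with rfl | rfl <;> rcases two_cases b with rfl | rfl <;>
    rcases two_cases c with rfl | rfl <;>
    norm_num [show (1 + 1 : ZMod 2) = 0 by decide, show ((1 : ZMod 2)).val = 1 by decide,
      show ((0 : ZMod 2)).val = 0 by decide, show ((2 : ZMod 2)).val = 0 by decide]

lemma chi_mul (v x y : Fin n → ZMod 2) : chi v x * chi v y = chi v (x + y) := by
  rw [chi, chi, chi, ← Finset.prod_mul_distrib]
  exact Finset.prod_congr rfl fun j _ => zmod_aux _ _ _

def supp (w : Fin n → ZMod 2) : Finset (Fin n) := univ.filter (fun j => w j = 1)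

lemma card_supp (w : Fin n → ZMod 2) : (supp w).card = hammingNorm w := by
  unfold supp hammingNorm
  congr 1
  apply Finset.filter_congr
  intro j _
  rcases two_cases (w j) with h | h <;> simp [h]

lemma chi_eq (v u : Fin n → ZMod 2) :
    chi v u = (-1 : ℝ) ^ ((supp v ∩ supp u).card) := by
  rw [chi, Finset.prod_pow_eq_pow_sum]
  congr 1
  rw [supp, supp, ← Finset.filter_and, Finset.card_filter]
  apply Finset.sum_congr rfl
  intro j _
  rcases two_cases (v j) with h | h <;> rcases two_cases (u j) with h' | h' <;>
    simp [h, h', show ((1 : ZMod 2)).val = 1 by decide]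

lemma card_filter_inter (T : Finset (Fin n)) (k j : ℕ) (hjk : j ≤ k) :
    (((powersetCard k (univ : Finset (Fin n)))).filter (fun S => (S ∩ T).card = j)).card
      = T.card.choose j * ((n - T.card).choose (k - j)) := by
  have hTc : ((univ : Finset (Fin n)) \ T).card = n - T.card := by
    rw [Finset.card_sdiff, Finset.inter_univ]; simp
  rw [← hTc, ← Finset.card_powersetCard j T, ← Finset.card_powersetCard (k - j) (univ \ T),
    ← Finset.card_product]
  apply Finset.card_nbij' (fun S => (S ∩ T, S \ T)) (fun p => p.1 ∪ p.2)
  · intro S hS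
    simp only [Finset.mem_coe, Finset.mem_filter, Finset.mem_powersetCard] at hS
    obtain ⟨⟨_, hcard⟩, hj⟩ := hS
    simp only [Finset.mem_coe, Finset.mem_product, Finset.mem_powersetCard]
    have hsd : (S \ T).card + (S ∩ T).card = S.card := Finset.card_sdiff_add_card_inter S T
    refine ⟨⟨Finset.inter_subset_right, hj⟩,
      ⟨Finset.sdiff_subset_sdiff (Finset.subset_univ S) le_rfl, ?_⟩⟩
    omega
  · intro p hp
    simp only [Finset.mem_coe, Finset.mem_product, Finset.mem_powersetCard] at hp
    obtain ⟨⟨h1s, h1c⟩, h2s, h2c⟩ := hp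
    have hdisj : Disjoint p.1 p.2 := by
      apply Finset.disjoint_left.mpr
      intro x hx1 hx2
      exact (Finset.mem_sdiff.mp (h2s hx2)).2 (h1s hx1)
    have hP2T : p.2 ∩ T = ∅ := by
      apply Finset.eq_empty_of_forall_notMem
      intro x hx
      exact (Finset.mem_sdiff.mp (h2s (Finset.mem_inter.mp hx).1)).2 (Finset.mem_inter.mp hx).2
    have hint : (p.1 ∪ p.2) ∩ T = p.1 := by
      rw [Finset.union_inter_distrib_right, Finset.inter_eq_left.mpr h1s, hP2T,
        Finset.union_empty]
    simp only [Finset.mem_coe, Finset.mem_filter, Finset.mem_powersetCard]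
    refine ⟨⟨Finset.subset_univ _, ?_⟩, by rw [hint, h1c]⟩
    rw [Finset.card_union_of_disjoint hdisj, h1c, h2c]
    omega
  · intro S _
    dsimp only
    rw [Finset.union_comm]
    exact Finset.sdiff_union_inter S T
  · intro p hp
    simp only [Finset.mem_coe, Finset.mem_product, Finset.mem_powersetCard] at hp
    obtain ⟨⟨h1s, h1c⟩, h2s, h2c⟩ := hp
    have hP2T : p.2 ∩ T = ∅ := by
      apply Finset.eq_empty_of_forall_notMem
      intro x hx
      exact (Finset.mem_sdiff.mp (h2s (Finset.mem_inter.mp hx).1)).2 (Finset.mem_inter.mp hx).2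
    have hint : (p.1 ∪ p.2) ∩ T = p.1 := by
      rw [Finset.union_inter_distrib_right, Finset.inter_eq_left.mpr h1s, hP2T,
        Finset.union_empty]
    have hsd : (p.1 ∪ p.2) \ T = p.2 := by
      rw [Finset.union_sdiff_distrib, Finset.sdiff_eq_empty_iff_subset.mpr h1s,
        Finset.empty_union]
      apply Finset.sdiff_eq_self_iff_disjoint.mpr
      rw [Finset.disjoint_iff_inter_eq_empty, Finset.inter_comm] at *
      exact hP2T
    exact Prod.ext hint hsd

lemma key_count (T : Finset (Fin n)) (k : ℕ) :
    ∑ S ∈ powersetCard k (univ : Finset (Fin n)), (-1 : ℝ) ^ ((S ∩ T).card)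
      = kraw n k T.card := by
  rw [kraw, ← Finset.sum_fiberwise_of_maps_to (t := Finset.range (k + 1))
      (g := fun S => (S ∩ T).card)
      (fun S hS => by
        simp only [Finset.mem_powersetCard] at hS
        simp only [Finset.mem_range]
        have h2 := Finset.card_le_card (Finset.inter_subset_left : S ∩ T ⊆ S)
        omega)]
  apply Finset.sum_congr rfl
  intro j hj
  rw [Finset.sum_congr rfl (fun S hS => by
      rw [(Finset.mem_filter.mp hS).2]),
    Finset.sum_const,
    card_filter_inter T k j (Nat.lt_succ_iff.mp (Finset.mem_range.mp hj))]
  ring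

lemma sum_chi (k : ℕ) (u : Fin n → ZMod 2) :
    ∑ v ∈ univ.filter (fun v => hammingNorm v = k), chi v u
      = kraw n k (hammingNorm u) := by
  rw [← card_supp u, ← key_count (supp u) k]
  apply Finset.sum_nbij' (i := fun v => supp v)
    (j := fun S => (fun x => if x ∈ S then (1 : ZMod 2) else 0))
  · intro v hv
    simp only [Finset.mem_filter] at hv
    rw [Finset.mem_powersetCard]
    exact ⟨Finset.subset_univ _, by rw [card_supp]; exact hv.2⟩
  · intro S hS
    rw [Finset.mem_powersetCard] at hS
    simp only [Finset.mem_filter]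
    have hsupp : supp (fun x => if x ∈ S then (1 : ZMod 2) else 0) = S := by
      ext x
      simp only [supp, Finset.mem_filter, Finset.mem_univ, true_and]
      split <;> simp_all
    refine ⟨Finset.mem_univ _, ?_⟩
    rw [← card_supp, hsupp, hS.2]
  · intro v _
    funext x
    simp only [supp, Finset.mem_filter, Finset.mem_univ, true_and]
    rcases two_cases (v x) with h | h <;> simp [h]
  · intro S hS
    ext x
    simp only [supp, Finset.mem_filter, Finset.mem_univ, true_and]
    split <;> simp_all
  · intro v _
    exact chi_eq v u

lemma sub_eq_add (x y : Fin n → ZMod 2) : x - y = x + y := by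
  funext j
  simp only [Pi.sub_apply, Pi.add_apply, sub_eq_add_neg, CharTwo.neg_eq]

lemma kraw_dist_eq (x y : Fin n → ZMod 2) (k : ℕ) :
    kraw n k (hammingDist x y)
      = ∑ v ∈ univ.filter (fun v => hammingNorm v = k), chi v x * chi v y := by
  rw [hammingDist_eq_hammingNorm, neg_add_eq_sub, sub_eq_add, add_comm, ← sum_chi]
  exact Finset.sum_congr rfl fun v _ => (chi_mul v x y).symm

lemma delsarte (C : Finset (Fin n → ZMod 2)) (k : ℕ) :
    0 ≤ ∑ p ∈ C ×ˢ C, kraw n k (hammingDist p.1 p.2) := by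
  rw [Finset.sum_congr rfl (fun p _ => kraw_dist_eq p.1 p.2 k), Finset.sum_comm]
  apply Finset.sum_nonneg
  intro v _
  have : ∑ p ∈ C ×ˢ C, chi v p.1 * chi v p.2 = (∑ x ∈ C, chi v x) * (∑ y ∈ C, chi v y) := by
    rw [Finset.sum_mul_sum, Finset.sum_product]
  rw [this]
  exact mul_self_nonneg _

lemma dist_mem_range (x y : Fin n → ZMod 2) : hammingDist x y ∈ Finset.range (n + 1) := by
  rw [Finset.mem_range, Nat.lt_succ_iff]
  simpa using (hammingDist_le_card_fintype (x := x) (y := y))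

lemma sum_kraw_card (C : Finset (Fin n → ZMod 2)) (k : ℕ) :
    ∑ i ∈ Finset.range (n + 1),
        kraw n k i * (((C ×ˢ C).filter (fun p => hammingDist p.1 p.2 = i)).card : ℝ)
      = ∑ p ∈ C ×ˢ C, kraw n k (hammingDist p.1 p.2) := by
  rw [← Finset.sum_fiberwise_of_maps_to (t := Finset.range (n + 1))
      (g := fun p : (Fin n → ZMod 2) × (Fin n → ZMod 2) => hammingDist p.1 p.2)
      (fun p _ => dist_mem_range p.1 p.2)]
  apply Finset.sum_congr rfl
  intro i _
  rw [Finset.sum_congr rfl (fun p hp => by rw [(Finset.mem_filter.mp hp).2]),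
    Finset.sum_const, nsmul_eq_mul, mul_comm]

lemma delsarte' (C : Finset (Fin n → ZMod 2)) (hC : C.Nonempty) (k : ℕ) :
    0 ≤ ∑ i ∈ Finset.range (n + 1), kraw n k i * distDistr n C i := by
  have hcard : (0 : ℝ) < (C.card : ℝ) := by
    exact_mod_cast Finset.card_pos.mpr hC
  have : ∑ i ∈ Finset.range (n + 1), kraw n k i * distDistr n C i
      = (∑ p ∈ C ×ˢ C, kraw n k (hammingDist p.1 p.2)) / (C.card : ℝ) := by
    rw [← sum_kraw_card C k, Finset.sum_div]
    apply Finset.sum_congr rfl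
    intro i _
    rw [distDistr, mul_div_assoc]
  rw [this]
  exact div_nonneg (delsarte C k) hcard.le

lemma kraw_zero (i : ℕ) : kraw n 0 i = 1 := by
  simp [kraw]

lemma distDistr_zero (C : Finset (Fin n → ZMod 2)) (hC : C.Nonempty) :
    distDistr n C 0 = 1 := by
  have hcard : (0 : ℝ) < (C.card : ℝ) := by
    exact_mod_cast Finset.card_pos.mpr hC
  rw [distDistr]
  have : ((C ×ˢ C).filter (fun p => hammingDist p.1 p.2 = 0)).card = C.card := by
    apply Finset.card_nbij' (fun p => p.1) (fun c => (c, c))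
    · intro p hp
      simp only [Finset.mem_coe, Finset.mem_filter, Finset.mem_product] at hp
      exact hp.1.1
    · intro c hc
      simp only [Finset.mem_coe, Finset.mem_filter, Finset.mem_product]
      exact ⟨⟨hc, hc⟩, hammingDist_eq_zero.mpr rfl⟩
    · intro p hp
      simp only [Finset.mem_coe, Finset.mem_filter] at hp
      have h := hammingDist_eq_zero.mp hp.2
      exact Prod.ext rfl h
    · intro c _
      rfl
  rw [this, div_self hcard.ne']

lemma sum_distDistr (C : Finset (Fin n → ZMod 2)) (hC : C.Nonempty) :
    ∑ i ∈ Finset.range (n + 1), distDistr n C i = (C.card : ℝ) := by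
  have hcard : (0 : ℝ) < (C.card : ℝ) := by
    exact_mod_cast Finset.card_pos.mpr hC
  have hpart : ∑ i ∈ Finset.range (n + 1),
      (((C ×ˢ C).filter (fun p => hammingDist p.1 p.2 = i)).card : ℝ)
      = ((C ×ˢ C).card : ℝ) := by
    rw [← Nat.cast_sum]
    congr 1
    exact (Finset.card_eq_sum_card_fiberwise (fun p _ => dist_mem_range p.1 p.2)).symm
  have : ∑ i ∈ Finset.range (n + 1), distDistr n C i
      = (∑ i ∈ Finset.range (n + 1),
          (((C ×ˢ C).filter (fun p => hammingDist p.1 p.2 = i)).card : ℝ)) / (C.card : ℝ) := by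
    rw [Finset.sum_div]
    rfl
  rw [this, hpart, Finset.card_product]
  push_cast
  field_simp

lemma distDistr_nonneg (C : Finset (Fin n → ZMod 2)) (i : ℕ) : 0 ≤ distDistr n C i := by
  rw [distDistr]
  positivity

end Stmt3Aux

/-- Main theorem of the polynomial method: if `f(x) = Σ f_k K_k(x)` has nonnegative
Krawtchouk coefficients `f_k ≥ 0` (1 ≤ k ≤ n) and `f(i) ≤ g(i)` on `{0,…,n}`, then
`Σ_{i=1}^n g(i) A_i ≥ |C| f_0 − f(0)`. -/
theorem stmt3 (n : ℕ) (C : Finset (Fin n → ZMod 2)) (hC : C.Nonempty)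
    (fc : ℕ → ℝ) (g : ℕ → ℝ)
    (hfc : ∀ k, 1 ≤ k → k ≤ n → 0 ≤ fc k)
    (hfg : ∀ i, i ≤ n → (∑ k ∈ Finset.range (n + 1), fc k * kraw n k i) ≤ g i) :
    ∑ i ∈ Finset.Icc 1 n, g i * distDistr n C i
      ≥ (C.card : ℝ) * fc 0 - (∑ k ∈ Finset.range (n + 1), fc k * kraw n k 0) := by
  classical
  set A : ℕ → ℝ := distDistr n C with hA
  set F : ℕ → ℝ := fun i => ∑ k ∈ Finset.range (n + 1), fc k * kraw n k i with hF
  set D : ℕ → ℝ := fun k => ∑ i ∈ Finset.range (n + 1), kraw n k i * A i with hD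
  have hsplit : Finset.range (n + 1) = insert 0 (Finset.Icc 1 n) := by
    ext x
    simp only [Finset.mem_range, Finset.mem_insert, Finset.mem_Icc]
    omega
  have h0notin : (0 : ℕ) ∉ Finset.Icc 1 n := by simp
  -- Step 1: g i A i ≥ F i A i on Icc 1 n
  have h1 : ∑ i ∈ Finset.Icc 1 n, F i * A i ≤ ∑ i ∈ Finset.Icc 1 n, g i * A i := by
    apply Finset.sum_le_sum
    intro i hi
    have hin : i ≤ n := (Finset.mem_Icc.mp hi).2
    exact mul_le_mul_of_nonneg_right (hfg i hin) (Stmt3Aux.distDistr_nonneg C i)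
  -- Step 2: sum over range (n+1)
  have h2 : ∑ i ∈ Finset.range (n + 1), F i * A i
      = F 0 * A 0 + ∑ i ∈ Finset.Icc 1 n, F i * A i := by
    rw [hsplit, Finset.sum_insert h0notin]
  -- Step 3: swap sums
  have h3 : ∑ i ∈ Finset.range (n + 1), F i * A i
      = ∑ k ∈ Finset.range (n + 1), fc k * D k := by
    simp only [hF, hD, Finset.sum_mul, Finset.mul_sum]
    rw [Finset.sum_comm]
    apply Finset.sum_congr rfl
    intro k _
    apply Finset.sum_congr rfl
    intro i _
    ring
  -- Step 4: lower bound the swapped sum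
  have h4 : (C.card : ℝ) * fc 0 ≤ ∑ k ∈ Finset.range (n + 1), fc k * D k := by
    rw [hsplit, Finset.sum_insert h0notin]
    have hzero : D 0 = (C.card : ℝ) := by
      rw [hD]
      simp only
      rw [Finset.sum_congr rfl (fun i _ => by rw [Stmt3Aux.kraw_zero, one_mul])]
      exact Stmt3Aux.sum_distDistr C hC
    have hrest : 0 ≤ ∑ k ∈ Finset.Icc 1 n, fc k * D k := by
      apply Finset.sum_nonneg
      intro k hk
      have hk1 := Finset.mem_Icc.mp hk
      exact mul_nonneg (hfc k hk1.1 hk1.2) (Stmt3Aux.delsarte' C hC k)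
    rw [hzero]
    nlinarith [hrest]
  -- Combine
  have hA0 : A 0 = 1 := Stmt3Aux.distDistr_zero C hC
  have := h2
  rw [h3] at this
  have hfinal : ∑ i ∈ Finset.Icc 1 n, F i * A i
      ≥ (C.card : ℝ) * fc 0 - F 0 := by
    rw [hA0, mul_one] at this
    linarith [h4]
  calc ∑ i ∈ Finset.Icc 1 n, g i * A i
      ≥ ∑ i ∈ Finset.Icc 1 n, F i * A i := h1
    _ ≥ (C.card : ℝ) * fc 0 - F 0 := hfinal
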